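/- arXiv:2302.00822 — 2 statements merged into one kernel-verified Lean document; each statement's English description precedes it below -/
import Mathlib

section
/- Let X₁, …, Xₙ be real random variables with E[e^{|Xᵢ|}] < ∞ for each i. Then for every p ∈ [1,∞) there is a constant C = C(p) < ∞ such that E[max_{1≤i≤n} |Xᵢ|^p] ≤ C·((p−1)^p + (log(∑_{i=1}^n E[e^{|Xᵢ|}]))^p). -/
open MeasureTheory

private lemma rpow_le_fact_mul_exp (p : ℝ) (hp : 1 ≤ p) {y : ℝ} (hy : 0 ≤ y) :
    y ^ p ≤ (Nat.ceil p).factorial * Real.exp y := by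
  have hp0 : 0 < p := lt_of_lt_of_le one_pos hp
  have hK1 : (1 : ℝ) ≤ (Nat.ceil p).factorial := by exact_mod_cast (Nat.ceil p).factorial_pos
  rcases le_total y 1 with hy1 | hy1
  · have h1 : y ^ p ≤ 1 := Real.rpow_le_one hy hy1 hp0.le
    have h2 : (1:ℝ) ≤ Real.exp y := Real.one_le_exp hy
    nlinarith
  · calc y ^ p ≤ y ^ ((Nat.ceil p : ℕ) : ℝ) :=
          Real.rpow_le_rpow_of_exponent_le hy1 (Nat.le_ceil p)
      _ = y ^ (Nat.ceil p) := Real.rpow_natCast y _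
      _ ≤ (Nat.ceil p).factorial * Real.exp y := by
          have h := Real.pow_div_factorial_le_exp (x := y) (le_trans zero_le_one hy1) (Nat.ceil p)
          have hKpos : (0:ℝ) < (Nat.ceil p).factorial := by positivity
          rw [div_le_iff₀ hKpos] at h
          linarith [h]

private lemma rpow_le_split (p : ℝ) (hp : 1 ≤ p) {x t : ℝ} (hx : 0 ≤ x) (ht : 0 ≤ t) :
    x ^ p ≤ 2 ^ p * t ^ p + 2 ^ p * (Nat.ceil p).factorial * Real.exp (x - t) := by
  have hp0 : 0 < p := lt_of_lt_of_le one_pos hp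
  have h2p : (0:ℝ) < 2 ^ p := Real.rpow_pos_of_pos two_pos p
  have hK1 : (1 : ℝ) ≤ (Nat.ceil p).factorial := by exact_mod_cast (Nat.ceil p).factorial_pos
  rcases le_total x (2 * t) with hxt | hxt
  · have h1 : x ^ p ≤ (2 * t) ^ p := Real.rpow_le_rpow hx hxt hp0.le
    have h2 : (2 * t) ^ p = 2 ^ p * t ^ p := Real.mul_rpow (by norm_num) ht
    have h3 : (0:ℝ) < Real.exp (x - t) := Real.exp_pos _
    nlinarith [mul_pos (mul_pos h2p (lt_of_lt_of_le one_pos hK1)) h3]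
  · have hx2 : x / 2 ≤ x - t := by linarith
    have h1 : x ^ p = 2 ^ p * (x / 2) ^ p := by
      rw [← Real.mul_rpow (by norm_num) (by linarith)]
      ring_nf
    have h2 : (x / 2) ^ p ≤ (Nat.ceil p).factorial * Real.exp (x / 2) :=
      rpow_le_fact_mul_exp p hp (by linarith)
    have h3 : Real.exp (x / 2) ≤ Real.exp (x - t) := Real.exp_le_exp.2 hx2
    have ht0 : 0 ≤ t ^ p := Real.rpow_nonneg ht p
    have h4 : (x / 2) ^ p ≤ (Nat.ceil p).factorial * Real.exp (x - t) := by
      calc (x / 2) ^ p ≤ (Nat.ceil p).factorial * Real.exp (x / 2) := h2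
        _ ≤ (Nat.ceil p).factorial * Real.exp (x - t) := by
            apply mul_le_mul_of_nonneg_left h3 (by positivity)
    calc x ^ p = 2 ^ p * (x / 2) ^ p := h1
      _ ≤ 2 ^ p * ((Nat.ceil p).factorial * Real.exp (x - t)) :=
          mul_le_mul_of_nonneg_left h4 h2p.le
      _ ≤ 2 ^ p * t ^ p + 2 ^ p * (Nat.ceil p).factorial * Real.exp (x - t) := by
          nlinarith

/-- For every `p ∈ [1,∞)` there is `C = C(p)` such that for any finitely many random
variables with `E[e^{|Xᵢ|}] < ∞`,
`E[maxᵢ |Xᵢ|^p] ≤ C ((p−1)^p + (log ∑ᵢ E[e^{|Xᵢ|}])^p)`. -/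
theorem stmt4 (p : ℝ) (hp : 1 ≤ p) :
    ∃ C : ℝ, ∀ (Ω : Type) (_ : MeasurableSpace Ω) (μ : Measure Ω)
      (_ : IsProbabilityMeasure μ) (n : ℕ) (_ : 0 < n) (X : Fin n → Ω → ℝ),
      (∀ i, Integrable (fun ω => Real.exp |X i ω|) μ) →
      ∫ ω, (⨆ i, |X i ω| ^ p) ∂μ ≤
        C * ((p - 1) ^ p + (Real.log (∑ i, ∫ ω, Real.exp |X i ω| ∂μ)) ^ p) := by
  classical
  have hp0 : 0 < p := lt_of_lt_of_le one_pos hp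
  have hK1 : (1 : ℝ) ≤ ((Nat.ceil p).factorial : ℝ) := by
    exact_mod_cast (Nat.ceil p).factorial_pos
  have h2p : (0:ℝ) < 2 ^ p := Real.rpow_pos_of_pos two_pos p
  refine ⟨if p = 1 then 7 else max (2 ^ p) (2 ^ p * ((Nat.ceil p).factorial : ℝ) / (p - 1) ^ p), ?_⟩
  intro Ω _ μ _ n hn X hX
  have hne : Nonempty (Fin n) := ⟨⟨0, hn⟩⟩
  set S : ℝ := ∑ i, ∫ ω, Real.exp |X i ω| ∂μ with hSdef
  have h1 : ∀ i : Fin n, 1 ≤ ∫ ω, Real.exp |X i ω| ∂μ := by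
    intro i
    calc (1:ℝ) = ∫ _ω, (1:ℝ) ∂μ := by simp
      _ ≤ ∫ ω, Real.exp |X i ω| ∂μ :=
        integral_mono (integrable_const 1) (hX i) fun ω => Real.one_le_exp (abs_nonneg _)
  have hSn : (n : ℝ) ≤ S := by
    have := Finset.sum_le_sum (s := (Finset.univ : Finset (Fin n)))
      (fun i _ => h1 i)
    simpa using this
  have hS1 : (1:ℝ) ≤ S := le_trans (by exact_mod_cast hn) hSn
  have hS0 : (0:ℝ) < S := lt_of_lt_of_le one_pos hS1
  set s : ℝ := Real.log S with hsdef
  have hs0 : 0 ≤ s := Real.log_nonneg hS1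
  have hes : Real.exp s = S := Real.exp_log hS0
  -- pointwise bounds on the supremum
  have hbdd : ∀ ω, BddAbove (Set.range fun i => |X i ω| ^ p) :=
    fun ω => Set.Finite.bddAbove (Set.finite_range _)
  have hsup_nonneg : ∀ ω, 0 ≤ ⨆ i, |X i ω| ^ p := by
    intro ω
    exact le_trans (Real.rpow_nonneg (abs_nonneg _) p)
      (le_ciSup (hbdd ω) (Classical.arbitrary (Fin n)))
  have hexp_le_sum : ∀ (i : Fin n) (ω : Ω),
      Real.exp |X i ω| ≤ ∑ j, Real.exp |X j ω| := by
    intro i ω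
    exact Finset.single_le_sum (f := fun j => Real.exp |X j ω|)
      (fun j _ => (Real.exp_pos _).le) (Finset.mem_univ i)
  -- the main bound : ∫ sup ≤ 2^p s^p + 2^p K
  have main : ∫ ω, (⨆ i, |X i ω| ^ p) ∂μ ≤ 2 ^ p * s ^ p + 2 ^ p * ((Nat.ceil p).factorial : ℝ) := by
    have hgint : Integrable
        (fun ω => 2 ^ p * s ^ p + 2 ^ p * ((Nat.ceil p).factorial : ℝ) * Real.exp (-s) * ∑ j, Real.exp |X j ω|) μ := by
      exact (integrable_const _).add
        (((integrable_finset_sum _ (fun i _ => hX i)).const_mul _))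
    have hle : ∀ ω, (⨆ i, |X i ω| ^ p) ≤
        2 ^ p * s ^ p + 2 ^ p * ((Nat.ceil p).factorial : ℝ) * Real.exp (-s) * ∑ j, Real.exp |X j ω| := by
      intro ω
      refine ciSup_le fun i => ?_
      have h := rpow_le_split p hp (abs_nonneg (X i ω)) hs0
      have hsum : Real.exp (|X i ω| - s) ≤ Real.exp (-s) * ∑ j, Real.exp |X j ω| := by
        rw [sub_eq_add_neg, add_comm, Real.exp_add]
        exact mul_le_mul_of_nonneg_left (hexp_le_sum i ω) (Real.exp_pos _).le
      have hKpos : (0:ℝ) < 2 ^ p * ((Nat.ceil p).factorial : ℝ) := by positivity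
      calc |X i ω| ^ p ≤ 2 ^ p * s ^ p + 2 ^ p * ((Nat.ceil p).factorial : ℝ) * Real.exp (|X i ω| - s) := h
        _ ≤ 2 ^ p * s ^ p + 2 ^ p * ((Nat.ceil p).factorial : ℝ) * (Real.exp (-s) * ∑ j, Real.exp |X j ω|) := by
            have := mul_le_mul_of_nonneg_left hsum hKpos.le
            linarith
        _ = 2 ^ p * s ^ p + 2 ^ p * ((Nat.ceil p).factorial : ℝ) * Real.exp (-s) * ∑ j, Real.exp |X j ω| := by ring
    have hint := integral_mono_of_nonneg
      (Filter.Eventually.of_forall hsup_nonneg) hgint (Filter.Eventually.of_forall hle)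
    have hgval : ∫ ω, (2 ^ p * s ^ p + 2 ^ p * ((Nat.ceil p).factorial : ℝ) * Real.exp (-s) * ∑ j, Real.exp |X j ω|) ∂μ
        = 2 ^ p * s ^ p + 2 ^ p * ((Nat.ceil p).factorial : ℝ) * Real.exp (-s) * S := by
      rw [integral_add (integrable_const _)
        ((integrable_finset_sum _ (fun i _ => hX i)).const_mul _)]
      simp only [integral_const, measure_univ, probReal_univ, ENNReal.toReal_one, smul_eq_mul, one_mul]
      rw [integral_const_mul, integral_finset_sum _ (fun i _ => hX i)]
    have hexpS : Real.exp (-s) * S = 1 := by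
      rw [Real.exp_neg, hes]
      field_simp
    rw [hgval] at hint
    calc ∫ ω, (⨆ i, |X i ω| ^ p) ∂μ
        ≤ 2 ^ p * s ^ p + 2 ^ p * ((Nat.ceil p).factorial : ℝ) * Real.exp (-s) * S := hint
      _ = 2 ^ p * s ^ p + 2 ^ p * ((Nat.ceil p).factorial : ℝ) * (Real.exp (-s) * S) := by ring
      _ = 2 ^ p * s ^ p + 2 ^ p * ((Nat.ceil p).factorial : ℝ) := by rw [hexpS]; ring
  by_cases hp1 : p = 1
  · -- p = 1
    subst hp1
    rw [if_pos rfl]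
    simp only [Real.rpow_one] at main ⊢
    norm_num [Nat.ceil_one, Nat.factorial_one] at main
    rcases le_total 1 s with hs1 | hs1
    · -- large s : use main
      linarith
    · -- small s : use the linear bound
      have main2 : ∫ ω, (⨆ i, |X i ω|) ∂μ ≤ S - n := by
        have hgint : Integrable (fun ω => ∑ j, (Real.exp |X j ω| - 1)) μ :=
          integrable_finset_sum _ (fun i _ => (hX i).sub (integrable_const 1))
        have hle : ∀ ω, (⨆ i, |X i ω|) ≤ ∑ j, (Real.exp |X j ω| - 1) := by
          intro ω
          refine ciSup_le fun i => ?_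
          have h1' : |X i ω| ≤ Real.exp |X i ω| - 1 := by
            have := Real.add_one_le_exp (|X i ω|)
            linarith
          refine le_trans h1' (Finset.single_le_sum (f := fun j => Real.exp |X j ω| - 1)
            (fun j _ => ?_) (Finset.mem_univ i))
          show (0:ℝ) ≤ Real.exp |X j ω| - 1
          have := Real.one_le_exp (abs_nonneg (X j ω))
          linarith
        have hnn : ∀ ω, 0 ≤ ⨆ i, |X i ω| := by
          intro ω
          exact le_trans (abs_nonneg (X (Classical.arbitrary (Fin n)) ω))
            (le_ciSup (f := fun i => |X i ω|)
              (Set.Finite.bddAbove (Set.finite_range _)) (Classical.arbitrary (Fin n)))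
        have hint := integral_mono_of_nonneg
          (Filter.Eventually.of_forall hnn) hgint (Filter.Eventually.of_forall hle)
        have : ∫ ω, (∑ j, (Real.exp |X j ω| - 1)) ∂μ = S - n := by
          have hint2 : ∀ i ∈ (Finset.univ : Finset (Fin n)),
              Integrable (fun ω => Real.exp |X i ω| - 1) μ :=
            fun i _ => (hX i).sub (integrable_const 1)
          rw [integral_finset_sum _ hint2]
          have : ∀ i : Fin n, ∫ ω, (Real.exp |X i ω| - 1) ∂μ
              = (∫ ω, Real.exp |X i ω| ∂μ) - 1 := by
            intro i
            rw [integral_sub (hX i) (integrable_const 1)]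
            simp
          rw [Finset.sum_congr rfl (fun i _ => this i)]
          rw [Finset.sum_sub_distrib]
          simp [hSdef]
        rw [this] at hint
        exact hint
      -- e^s - 1 ≤ (e-1) s on [0,1]
      have hconv : Real.exp s ≤ (1 - s) + s * Real.exp 1 := by
        have h := convexOn_exp.2 (Set.mem_univ (0:ℝ)) (Set.mem_univ (1:ℝ))
          (by linarith : (0:ℝ) ≤ 1 - s) hs0 (by ring)
        simpa [smul_eq_mul] using h
      have he3 : Real.exp 1 < 3 := by
        have := Real.exp_one_lt_d9
        linarith
      have hSle : S - 1 ≤ 2 * s := by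
        have : S = Real.exp s := hes.symm
        nlinarith
      have hn1 : (1:ℝ) ≤ n := by exact_mod_cast hn
      calc ∫ ω, (⨆ i, |X i ω|) ∂μ ≤ S - n := main2
        _ ≤ S - 1 := by linarith
        _ ≤ 2 * s := hSle
        _ ≤ 7 * (1 - 1 + s) := by linarith
  · -- p > 1
    have hp1' : 1 < p := lt_of_le_of_ne hp (Ne.symm hp1)
    have hpp : (0:ℝ) < (p - 1) ^ p := Real.rpow_pos_of_pos (by linarith) p
    simp only [if_neg hp1]
    set C : ℝ := max (2 ^ p) (2 ^ p * ((Nat.ceil p).factorial : ℝ) / (p - 1) ^ p) with hCdef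
    have hC1 : 2 ^ p ≤ C := le_max_left _ _
    have hC2 : 2 ^ p * ((Nat.ceil p).factorial : ℝ) / (p - 1) ^ p ≤ C := le_max_right _ _
    have hsp : 0 ≤ s ^ p := Real.rpow_nonneg hs0 p
    have hb1 : 2 ^ p * s ^ p ≤ C * s ^ p := mul_le_mul_of_nonneg_right hC1 hsp
    have hb2 : 2 ^ p * ((Nat.ceil p).factorial : ℝ) ≤ C * (p - 1) ^ p := by
      have := mul_le_mul_of_nonneg_right hC2 hpp.le
      rwa [div_mul_cancel₀ _ hpp.ne'] at this
    calc ∫ ω, (⨆ i, |X i ω| ^ p) ∂μ ≤ 2 ^ p * s ^ p + 2 ^ p * ((Nat.ceil p).factorial : ℝ) := main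
      _ ≤ C * (p - 1) ^ p + C * s ^ p := by linarith
      _ = C * ((p - 1) ^ p + s ^ p) := by ring
end

section
/- Let (Gₙ) be nonnegative reals with G_{n+1} ≤ θₙ Gₙ + C e^{−κn/2} where θₙ := 1 − 1/(C(n+1)^{3α}) for constants C ≥ 1, κ > 0, α ∈ (0,1/3), and assume e^{−κ/2} ≤ θ₀ ≤ θₙ for all n and G₀ ≤ C. Then there exist constants c > 0 and C' < ∞ (depending on C, κ, α) such that Gₙ ≤ C' exp(−c n^{1−3α}) for all n ∈ N. -/
set_option maxHeartbeats 1600000 in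
/-- If `G_{n+1} ≤ θₙ Gₙ + C e^{−κn/2}` with `θₙ = 1 − 1/(C(n+1)^{3α})`,
`e^{−κ/2} ≤ θ₀ ≤ θₙ`, and `G₀ ≤ C`, then `Gₙ ≤ C' exp(−c n^{1−3α})`. -/
theorem stmt8 (C κ α : ℝ) (hC : 1 ≤ C) (hκ : 0 < κ) (hα : α ∈ Set.Ioo (0:ℝ) (1/3))
    (G : ℕ → ℝ) (hG : ∀ n, 0 ≤ G n)
    (hrec : ∀ n : ℕ,
      G (n+1) ≤ (1 - 1 / (C * ((n:ℝ) + 1) ^ (3*α))) * G n + C * Real.exp (-κ * n / 2))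
    (hθ0 : Real.exp (-κ/2) ≤ 1 - 1 / (C * ((0:ℝ) + 1) ^ (3*α)))
    (hθmono : ∀ n : ℕ,
      1 - 1 / (C * ((0:ℝ) + 1) ^ (3*α)) ≤ 1 - 1 / (C * ((n:ℝ) + 1) ^ (3*α)))
    (hG0 : G 0 ≤ C) :
    ∃ c > (0:ℝ), ∃ C' : ℝ, ∀ n : ℕ, G n ≤ C' * Real.exp (-c * (n:ℝ) ^ (1 - 3*α)) := by
  obtain ⟨hα0, hα13⟩ := hα
  have h3α0 : 0 < 3*α := by linarith
  have h3α1 : 3*α < 1 := by linarith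
  set β : ℝ := 1 - 3*α with hβdef
  have hβ0 : 0 < β := by simp only [hβdef]; linarith
  have hβ1 : β ≤ 1 := by simp only [hβdef]; linarith
  have hC0 : (0:ℝ) < C := by linarith
  set θ : ℕ → ℝ := fun k => 1 - 1/(C * ((k:ℝ)+1)^(3*α)) with hθdef
  have hθlow : ∀ k, Real.exp (-κ/2) ≤ θ k := fun k => le_trans hθ0 (hθmono k)
  have hθpos : ∀ k, 0 < θ k := fun k => lt_of_lt_of_le (Real.exp_pos _) (hθlow k)
  set P : ℕ → ℝ := fun n => ∏ k ∈ Finset.range n, θ k with hPdef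
  have hPpos : ∀ n, 0 < P n := fun n => Finset.prod_pos (fun k _ => hθpos k)
  set E : ℝ := Real.exp (κ/2) with hEdef
  have hE1 : 1 ≤ E := by
    rw [hEdef, ← Real.exp_zero]
    exact Real.exp_le_exp.2 (by positivity)
  have hEinv : Real.exp (-κ/2) * E = 1 := by
    rw [hEdef, ← Real.exp_add]; ring_nf; exact Real.exp_zero
  -- exp(-κ n /2) ≤ P n
  have hexpP : ∀ n : ℕ, Real.exp (-κ * n / 2) ≤ P n := by
    intro n
    have h1 : Real.exp (-κ * n / 2) = ∏ _k ∈ Finset.range n, Real.exp (-κ/2) := by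
      rw [Finset.prod_const, ← Real.exp_nat_mul, Finset.card_range]
      ring_nf
    rw [h1]
    exact Finset.prod_le_prod (fun k _ => (Real.exp_pos _).le) (fun k _ => hθlow k)
  -- main induction
  have hmain : ∀ n : ℕ, G n ≤ P n * (C * (1 + n * E)) := by
    intro n
    induction n with
    | zero => simpa [hPdef] using hG0
    | succ n ih =>
      have h1 : G (n+1) ≤ θ n * G n + C * Real.exp (-κ * n / 2) := hrec n
      have h2 : θ n * G n ≤ θ n * (P n * (C * (1 + n * E))) :=
        mul_le_mul_of_nonneg_left ih (hθpos n).le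
      have hPsucc : P (n+1) = P n * θ n := by
        simp [hPdef, Finset.prod_range_succ]
      have h3 : Real.exp (-κ*n/2) ≤ P n := hexpP n
      have h4 : P n ≤ P (n+1) * E := by
        rw [hPsucc]
        have h5 : 1 ≤ θ n * E := by
          have h6 := mul_le_mul_of_nonneg_right (hθlow n) (le_trans zero_le_one hE1)
          rwa [hEinv] at h6
        nlinarith [(hPpos n).le]
      have hcast : ((n+1 : ℕ) : ℝ) = (n:ℝ) + 1 := by push_cast; ring
      rw [hcast]
      have hPn1 : 0 ≤ P (n+1) := (hPpos (n+1)).le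
      have hPn : 0 ≤ P n := (hPpos n).le
      have h7 : θ n * (P n * (C * (1 + n * E))) = P (n+1) * (C * (1 + n * E)) := by
        rw [hPsucc]; ring
      have h8 : C * Real.exp (-κ*n/2) ≤ C * (P (n+1) * E) :=
        mul_le_mul_of_nonneg_left (h3.trans h4) hC0.le
      have h9 : P (n+1) * (C * (1 + ((n:ℝ)+1) * E))
          = P (n+1) * (C * (1 + n * E)) + C * (P (n+1) * E) := by ring
      rw [h9]
      exact h1.trans (add_le_add (h2.trans_eq h7) h8)
  -- P n ≤ exp(-(1/C) n^β)
  have hPle : ∀ n : ℕ, P n ≤ Real.exp (-(1/C) * (n:ℝ)^β) := by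
    intro n
    rcases Nat.eq_zero_or_pos n with rfl | hn
    · simp [hPdef, Real.zero_rpow hβ0.ne']
    · have hn1 : (1:ℝ) ≤ (n:ℝ) := by exact_mod_cast hn
      have hn0 : (0:ℝ) < (n:ℝ) := by linarith
      have hstep : P n ≤ ∏ k ∈ Finset.range n, Real.exp (-(1/(C * ((k:ℝ)+1)^(3*α)))) := by
        apply Finset.prod_le_prod (fun k _ => (hθpos k).le)
        intro k _
        exact Real.one_sub_le_exp_neg _
      have hprodexp : ∏ k ∈ Finset.range n, Real.exp (-(1/(C * ((k:ℝ)+1)^(3*α))))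
          = Real.exp (∑ k ∈ Finset.range n, -(1/(C * ((k:ℝ)+1)^(3*α)))) :=
        (Real.exp_sum _ _).symm
      have hsum : (n:ℝ) * (1/(C * (n:ℝ)^(3*α))) ≤
          ∑ k ∈ Finset.range n, (1/(C * ((k:ℝ)+1)^(3*α))) := by
        have hterm : ∀ k ∈ Finset.range n,
            1/(C * (n:ℝ)^(3*α)) ≤ 1/(C * ((k:ℝ)+1)^(3*α)) := by
          intro k hk
          have hk' : (k:ℝ) + 1 ≤ (n:ℝ) := by
            have := Finset.mem_range.1 hk
            exact_mod_cast Nat.succ_le_of_lt this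
          have hrp : ((k:ℝ)+1)^(3*α) ≤ (n:ℝ)^(3*α) :=
            Real.rpow_le_rpow (by positivity) hk' h3α0.le
          have hkpos : (0:ℝ) < ((k:ℝ)+1)^(3*α) := Real.rpow_pos_of_pos (by positivity) _
          apply one_div_le_one_div_of_le (by positivity)
          exact mul_le_mul_of_nonneg_left hrp hC0.le
        calc (n:ℝ) * (1/(C * (n:ℝ)^(3*α)))
            = ∑ _k ∈ Finset.range n, (1/(C * (n:ℝ)^(3*α))) := by
              rw [Finset.sum_const, Finset.card_range, nsmul_eq_mul]
          _ ≤ _ := Finset.sum_le_sum hterm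
      have hnb : (n:ℝ) * (1/(C * (n:ℝ)^(3*α))) = (1/C) * (n:ℝ)^β := by
        have hsplit : (n:ℝ)^β = (n:ℝ) / (n:ℝ)^(3*α) := by
          rw [hβdef, Real.rpow_sub hn0, Real.rpow_one]
        rw [hsplit]
        have : (n:ℝ)^(3*α) ≠ 0 := (Real.rpow_pos_of_pos hn0 _).ne'
        field_simp
      calc P n ≤ Real.exp (∑ k ∈ Finset.range n, -(1/(C * ((k:ℝ)+1)^(3*α)))) := by
            rw [← hprodexp]; exact hstep
        _ ≤ Real.exp (-(1/C) * (n:ℝ)^β) := by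
            apply Real.exp_le_exp.2
            rw [Finset.sum_neg_distrib]
            have := hsum
            rw [hnb] at this
            linarith
  -- log bound : for n ≥ 1, (n:ℝ) ≤ exp(4C/β²) * exp(n^β/(4C))
  have hlogbound : ∀ n : ℕ, 1 ≤ n →
      (n:ℝ) ≤ Real.exp (4*C/β^2) * Real.exp ((1/(4*C)) * (n:ℝ)^β) := by
    intro n hn
    have hn1 : (1:ℝ) ≤ (n:ℝ) := by exact_mod_cast hn
    have hn0 : (0:ℝ) < (n:ℝ) := by linarith
    set y : ℝ := (n:ℝ)^(β/2) with hydef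
    have hy0 : 0 < y := Real.rpow_pos_of_pos hn0 _
    have hysq : y * y = (n:ℝ)^β := by
      rw [hydef, ← Real.rpow_add hn0]; ring_nf
    have hlogy : Real.log ((n:ℝ)) = (2/β) * Real.log y := by
      rw [hydef, Real.log_rpow hn0]
      field_simp
    have hylog : Real.log y ≤ y - 1 := Real.log_le_sub_one_of_pos hy0
    set ε : ℝ := β/(8*C) with hεdef
    have hε0 : 0 < ε := by positivity
    have hyb : y ≤ ε * (y*y) + 1/(4*ε) := by
      have hsq : 0 ≤ (2*ε*y - 1)^2 := sq_nonneg _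
      have h4ε : 0 < 4*ε := by positivity
      have key : ε*(y*y) + 1/(4*ε) - y = (2*ε*y - 1)^2 / (4*ε) := by
        field_simp; ring
      have h := div_nonneg hsq h4ε.le
      rw [← key] at h
      linarith
    have hlogle : Real.log ((n:ℝ)) ≤ (1/(4*C)) * (n:ℝ)^β + 4*C/β^2 := by
      rw [hlogy]
      have h2β : 0 < 2/β := by positivity
      have step : Real.log y ≤ ε * (n:ℝ)^β + 1/(4*ε) := by
        rw [← hysq]; linarith
      have := mul_le_mul_of_nonneg_left step h2β.le
      have hεeq : (2/β) * (ε * (n:ℝ)^β) = (1/(4*C)) * (n:ℝ)^β := by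
        rw [hεdef]; field_simp; ring
      have hεeq2 : (2/β) * (1/(4*ε)) = 4*C/β^2 := by
        rw [hεdef]; field_simp; ring
      nlinarith
    calc (n:ℝ) = Real.exp (Real.log ((n:ℝ))) := (Real.exp_log hn0).symm
      _ ≤ Real.exp ((1/(4*C)) * (n:ℝ)^β + 4*C/β^2) := Real.exp_le_exp.2 hlogle
      _ = Real.exp (4*C/β^2) * Real.exp ((1/(4*C)) * (n:ℝ)^β) := by
          rw [← Real.exp_add]; ring_nf
  -- conclude
  refine ⟨1/(2*C), by positivity, C * (1+E) * Real.exp (4*C/β^2), ?_⟩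
  intro n
  rcases Nat.eq_zero_or_pos n with rfl | hn
  · have hexp1 : (1:ℝ) ≤ Real.exp (4*C/β^2) := by
      rw [← Real.exp_zero]; exact Real.exp_le_exp.2 (by positivity)
    have h0 : Real.exp (-(1/(2*C)) * ((0:ℕ):ℝ)^β) = 1 := by
      norm_num [Real.zero_rpow hβ0.ne']
    rw [h0, mul_one]
    have s1 : C ≤ C * (1+E) := by nlinarith
    have s2 : C * (1+E) ≤ C * (1+E) * Real.exp (4*C/β^2) := by
      nlinarith [Real.exp_pos (4*C/β^2)]
    linarith
  · have hn1 : (1:ℝ) ≤ (n:ℝ) := by exact_mod_cast hn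
    have hnb0 : 0 ≤ (n:ℝ)^β := Real.rpow_nonneg (by positivity) _
    have h1 : G n ≤ P n * (C * (1 + n * E)) := hmain n
    have h2 : 1 + (n:ℝ) * E ≤ (n:ℝ) * (1+E) := by nlinarith
    have h3 : G n ≤ P n * (C * ((n:ℝ) * (1+E))) := by
      refine h1.trans ?_
      apply mul_le_mul_of_nonneg_left _ (hPpos n).le
      apply mul_le_mul_of_nonneg_left h2 hC0.le
    have h4 : G n ≤ Real.exp (-(1/C) * (n:ℝ)^β) * (C * ((n:ℝ) * (1+E))) := by
      refine h3.trans ?_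
      apply mul_le_mul_of_nonneg_right (hPle n)
      positivity
    have h5 : (n:ℝ) ≤ Real.exp (4*C/β^2) * Real.exp ((1/(4*C)) * (n:ℝ)^β) :=
      hlogbound n hn
    have h6 : G n ≤ Real.exp (-(1/C) * (n:ℝ)^β) *
        (C * ((Real.exp (4*C/β^2) * Real.exp ((1/(4*C)) * (n:ℝ)^β)) * (1+E))) := by
      refine h4.trans ?_
      apply mul_le_mul_of_nonneg_left _ (Real.exp_pos _).le
      apply mul_le_mul_of_nonneg_left _ hC0.le
      apply mul_le_mul_of_nonneg_right h5 (by linarith)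
    have hre : Real.exp (-(1/C) * (n:ℝ)^β) *
        (C * ((Real.exp (4*C/β^2) * Real.exp ((1/(4*C)) * (n:ℝ)^β)) * (1+E)))
        = C * (1+E) * Real.exp (4*C/β^2) *
          Real.exp (-(1/C) * (n:ℝ)^β + (1/(4*C)) * (n:ℝ)^β) := by
      rw [Real.exp_add]; ring
    rw [hre] at h6
    refine h6.trans ?_
    apply mul_le_mul_of_nonneg_left _ (by positivity)
    apply Real.exp_le_exp.2
    have hcc : (1/(2*C)) * (n:ℝ)^β ≤ (3/(4*C)) * (n:ℝ)^β := by
      apply mul_le_mul_of_nonneg_right _ hnb0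
      rw [div_le_div_iff₀ (by positivity) (by positivity)]
      nlinarith
    have hid : (1/C)*(n:ℝ)^β = (1/(4*C))*(n:ℝ)^β + (3/(4*C))*(n:ℝ)^β := by
      ring
    linarith [hcc, hid]
end
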